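/- For a pair (a, x) of coprime integers with 1 ≤ a ≤ x, (a, x)_q = N_q((a+x)/a), the numerator of the q-deformation of the rational number (a+x)/a. -/

import Mathlib

open Polynomial

/-- The `q`-integer `[c]_q = 1 + q + ⋯ + q^{c-1}` as a polynomial in `ℤ[q]`. -/
noncomputable def qInt (c : ℕ) : Polynomial ℤ := ∑ i ∈ Finset.range c, X ^ i

/-- The polynomial `(a, b)_q ∈ ℤ[q]` associated to a pair of coprime positive
integers: `(1, n)_q = (n, 1)_q = [n+1]_q`; if `a < b` then
`(a,b)_q = (a-r, r)_q + q·(a, b-a)_q` with `r = b % a`; if `a > b` then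
`(a,b)_q = (a-b, b)_q + q^⌈a/b⌉·(r, b-r)_q` with `r = a % b`.
(Values on non-coprime or zero inputs are junk.) -/
noncomputable def W : ℕ → ℕ → Polynomial ℤ
  | 1, b => qInt (b + 1)
  | a, 1 => qInt (a + 1)
  | 0, _ => 0
  | _, 0 => 0
  | a + 2, b + 2 =>
    if a < b then
      W (a + 2 - (b + 2) % (a + 2)) ((b + 2) % (a + 2)) + X * W (a + 2) (b - a)
    else
      W (a - b) (b + 2) +
        X ^ ((a + 2 + (b + 2) - 1) / (b + 2)) *
          W ((a + 2) % (b + 2)) (b + 2 - (a + 2) % (b + 2))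
  termination_by a b => a + b
  decreasing_by
  · have := Nat.mod_lt (b + 2) (show 0 < a + 2 by omega); omega
  · omega
  · omega
  · have := Nat.mod_lt (a + 2) (show 0 < b + 2 by omega); omega

/-- The sequence of digits of the negative continued fraction expansion
`x/a = [c₁, …, c_l]⁻` (each `cᵢ = ⌈·⌉` of the current fraction). By convention
`ncfDigits x 0 = []` (for `1/0 = ∞`) and `ncfDigits x 1 = [x]`. -/
def ncfDigits : ℕ → ℕ → List ℕ
  | _, 0 => []
  | x, 1 => [x]
  | x, a + 2 =>
      (x + (a + 2) - 1) / (a + 2) ::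
        ncfDigits (a + 2) ((x + (a + 2) - 1) / (a + 2) * (a + 2) - x)
  termination_by x a => a
  decreasing_by
    have := Nat.div_mul_le_self (x + (a + 2) - 1) (a + 2); omega

/-- The (coprime) numerator and denominator of the Morier-Genoud–Ovsienko
`q`-deformation of the negative continued fraction `[c₁, …, c_l]⁻`, computed by
the continuant recursion `(N, D) ↦ ([c]_q·N - q^{c-1}·D, N)`, with `(1, 0)` for
the empty list. -/
noncomputable def qCF : List ℕ → Polynomial ℤ × Polynomial ℤ
  | [] => (1, 0)
  | c :: rest =>
      let p := qCF rest
      (qInt c * p.1 - X ^ (c - 1) * p.2, p.1)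

/-- Numerator `N_q(x/a)` of the Morier-Genoud–Ovsienko `q`-rational `[x/a]_q`. -/
noncomputable def Nq (x a : ℕ) : Polynomial ℤ := (qCF (ncfDigits x a)).1

/-- Denominator `D_q(x/a)` of the Morier-Genoud–Ovsienko `q`-rational `[x/a]_q`. -/
noncomputable def Dq (x a : ℕ) : Polynomial ℤ := (qCF (ncfDigits x a)).2

/-- The normalized Jones polynomial `J_{x/a}(q) = q·N_q(x/a) + (1-q)·D_q(x/a)`. -/
noncomputable def Jq (x a : ℕ) : Polynomial ℤ := X * Nq x a + (1 - X) * Dq x a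

/-! ### Auxiliary lemmas -/

set_option maxHeartbeats 1600000 in
private lemma W_one_left (b : ℕ) : W 1 b = qInt (b + 1) := by
  match b with
  | 0 => delta W W._unary; rw [WellFounded.Nat.fix_eq]
  | 1 => delta W W._unary; rw [WellFounded.Nat.fix_eq]
  | b + 2 => delta W W._unary; rw [WellFounded.Nat.fix_eq]

private lemma W_one_right (a : ℕ) (ha : 1 ≤ a) : W a 1 = qInt (a + 1) := by
  match a, ha with
  | 1, _ => exact W_one_left 1
  | a + 2, _ => delta W W._unary; rw [WellFounded.Nat.fix_eq]

private lemma W_lt' (s x : ℕ) (hs : 2 ≤ s) (hx : 2 ≤ x) (h : s < x) :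
    W s x = W (s - x % s) (x % s) + X * W s (x - s) := by
  obtain ⟨a, rfl⟩ : ∃ a, s = a + 2 := ⟨s - 2, by omega⟩
  obtain ⟨b, rfl⟩ : ∃ b, x = b + 2 := ⟨x - 2, by omega⟩
  rw [show b + 2 - (a + 2) = b - a from by omega]
  delta W W._unary
  rw [WellFounded.Nat.fix_eq]
  show dite (a < b) _ _ = _
  rw [dif_pos (by omega : a < b)]

private lemma W_ge' (s x : ℕ) (hs : 2 ≤ s) (hx : 2 ≤ x) (h : x < s) :
    W s x = W (s - x) x + X ^ ((s + x - 1) / x) * W (s % x) (x - s % x) := by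
  obtain ⟨a, rfl⟩ : ∃ a, s = a + 2 := ⟨s - 2, by omega⟩
  obtain ⟨b, rfl⟩ : ∃ b, x = b + 2 := ⟨x - 2, by omega⟩
  rw [show a + 2 - (b + 2) = a - b from by omega]
  delta W W._unary
  rw [WellFounded.Nat.fix_eq]
  show dite (a < b) _ _ = _
  rw [dif_neg (by omega : ¬ a < b)]

private lemma qInt_succ (c : ℕ) : qInt (c + 1) = 1 + X * qInt c := by
  rw [qInt, qInt, geom_sum_succ]; ring

private lemma qInt_succ' (c : ℕ) : qInt (c + 1) = qInt c + X ^ c := by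
  rw [qInt, qInt, Finset.sum_range_succ]

private lemma qInt_one : qInt 1 = 1 := by simp [qInt]

private lemma ncfDigits_eq (x a : ℕ) (ha : 1 ≤ a) :
    ncfDigits x a = ((x + a - 1) / a) :: ncfDigits a (((x + a - 1) / a) * a - x) := by
  match a, ha with
  | 1, _ => simp [ncfDigits]
  | a + 2, _ => rw [ncfDigits]

private lemma Nq_unfold {x a c : ℕ} (ha : 1 ≤ a) (h1 : x ≤ c * a) (h2 : c * a < x + a) :
    Nq x a = qInt c * Nq a (c * a - x) - X ^ (c - 1) * Dq a (c * a - x) := by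
  have hd : (x + a - 1) / a = c := by
    apply Nat.div_eq_of_lt_le
    · omega
    · have h3 : (c + 1) * a = c * a + a := by ring
      omega
  rw [Nq, Dq, ncfDigits_eq x a ha, hd]
  simp [qCF, Nq, Dq]

private lemma Dq_unfold {x a c : ℕ} (ha : 1 ≤ a) (h1 : x ≤ c * a) (h2 : c * a < x + a) :
    Dq x a = Nq a (c * a - x) := by
  have hd : (x + a - 1) / a = c := by
    apply Nat.div_eq_of_lt_le
    · omega
    · have h3 : (c + 1) * a = c * a + a := by ring
      omega
  rw [Dq, ncfDigits_eq x a ha, hd]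
  simp [qCF, Nq]

private lemma div_bounds (m s : ℕ) (hs : 0 < s) : m / s * s ≤ m ∧ m < (m / s + 1) * s := by
  refine ⟨Nat.div_mul_le_self m s, ?_⟩
  have h1 := Nat.div_add_mod m s
  have h2 := Nat.mod_lt m hs
  have h3 : (m / s + 1) * s = s * (m / s) + s := by ring
  omega

private lemma Nq_Dq_add (x s : ℕ) (hx : 1 ≤ x) (hs : 1 ≤ s) :
    Nq (x + s) s = X * Nq x s + Dq x s ∧ Dq (x + s) s = Dq x s := by
  set c := (x + s - 1) / s with hc
  obtain ⟨hb1, hb2⟩ := div_bounds (x + s - 1) s hs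
  rw [← hc] at hb1 hb2
  have hcs : (c + 1) * s = c * s + s := by ring
  have h1 : x ≤ c * s := by omega
  have h2 : c * s < x + s := by omega
  have hc1 : 1 ≤ c := by
    rw [hc, Nat.one_le_div_iff hs]; omega
  have harg : (c + 1) * s - (x + s) = c * s - x := by omega
  have e1 : Nq (x + s) s =
      qInt (c + 1) * Nq s (c * s - x) - X ^ c * Dq s (c * s - x) := by
    have e := Nq_unfold (x := x + s) (a := s) (c := c + 1) hs (by omega) (by omega)
    rwa [harg, Nat.add_sub_cancel] at e
  have e2 := Nq_unfold (x := x) (a := s) (c := c) hs h1 h2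
  have e3 := Dq_unfold (x := x) (a := s) (c := c) hs h1 h2
  have e4 : Dq (x + s) s = Nq s (c * s - x) := by
    have e := Dq_unfold (x := x + s) (a := s) (c := c + 1) hs (by omega) (by omega)
    rwa [harg] at e
  have hXc : (X : Polynomial ℤ) ^ c = X * X ^ (c - 1) := by
    conv_lhs => rw [show c = (c - 1) + 1 from by omega]
    rw [pow_succ]; ring
  constructor
  · rw [e1, e2, e3, qInt_succ, hXc]; ring
  · rw [e4, e3]

private lemma Nq_den_add (x t : ℕ) (hx : 1 ≤ x) (ht : 1 ≤ t) :
    Nq x (t + x) = X * Nq x t := by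
  have e1 := Nq_unfold (x := x) (a := t + x) (c := 1) (by omega) (by omega) (by omega)
  rw [show 1 * (t + x) - x = t from by omega, add_comm t x] at e1
  obtain ⟨eN, eD⟩ := Nq_Dq_add x t hx ht
  rw [add_comm t x, e1, eN, eD, qInt_one, pow_zero]
  ring

private lemma Nq_den_add_mul (x t k : ℕ) (hx : 1 ≤ x) (ht : 1 ≤ t) :
    Nq x (t + k * x) = X ^ k * Nq x t := by
  induction k with
  | zero => simp
  | succ k ih =>
    rw [show t + (k + 1) * x = (t + k * x) + x from by ring,
      Nq_den_add x (t + k * x) hx (by omega), ih, pow_succ]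
    ring

private lemma Nq_zero (x : ℕ) : Nq x 0 = 1 := by simp [Nq, ncfDigits, qCF]

private lemma Dq_zero (x : ℕ) : Dq x 0 = 0 := by simp [Dq, ncfDigits, qCF]

private lemma Nq_one_one : Nq 1 1 = 1 := by
  have e := Nq_unfold (x := 1) (a := 1) (c := 1) le_rfl (by omega) (by omega)
  simpa [Nq_zero, Dq_zero, qInt_one] using e

private lemma Nq_one_left (s : ℕ) (hs : 1 ≤ s) : Nq 1 s = X ^ (s - 1) := by
  have h := Nq_den_add_mul 1 1 (s - 1) le_rfl le_rfl
  rwa [show (1 : ℕ) + (s - 1) * 1 = s from by omega, Nq_one_one, mul_one] at h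

private lemma Nq_den_one (p : ℕ) (hp : 1 ≤ p) : Nq p 1 = qInt p := by
  have e := Nq_unfold (x := p) (a := 1) (c := p) le_rfl (by omega) (by omega)
  rw [show p * 1 - p = 0 from by omega, Nq_zero, Dq_zero] at e
  simpa using e

private lemma coprime_sub_left (r s : ℕ) (h : r ≤ s) (hc : Nat.Coprime r s) :
    Nat.Coprime (s - r) s := by
  have h1 : Nat.Coprime (s - r) r := (Nat.coprime_sub_self_left h).mpr hc.symm
  have h2 : Nat.Coprime (s - r) (r + (s - r)) := Nat.coprime_add_self_right.mpr h1
  rwa [show r + (s - r) = s from by omega] at h2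

private lemma W_eq_Nq_aux :
    ∀ p s : ℕ, 1 ≤ s → s < p → Nat.Coprime s p → W s (p - s) = Nq p s := by
  intro p
  induction p using Nat.strong_induction_on with
  | _ p ih =>
  intro s hs1 hsp hco
  obtain ⟨x, rfl⟩ : ∃ x, p = s + x := ⟨p - s, by omega⟩
  have hx1 : 1 ≤ x := by omega
  rw [Nat.add_sub_cancel_left]
  rcases eq_or_lt_of_le hs1 with h1 | hs2
  · obtain rfl : s = 1 := h1.symm
    rw [W_one_left, Nq_den_one (1 + x) (by omega), show x + 1 = 1 + x from by omega]
  · have hs2' : 2 ≤ s := hs2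
    have hcsx : Nat.Coprime s x := by
      have h := hco
      rwa [show s + x = x + s from by omega, Nat.coprime_add_self_right] at h
    rcases eq_or_lt_of_le hx1 with hx | hx2
    · -- x = 1
      obtain rfl : x = 1 := hx.symm
      rw [W_one_right s (by omega)]
      obtain ⟨eN, _⟩ := Nq_Dq_add 1 s le_rfl (by omega)
      have eN' : Nq (s + 1) s = X * Nq 1 s + Dq 1 s := by
        rw [show s + 1 = 1 + s from by omega]; exact eN
      have eDq : Dq 1 s = Nq s (s - 1) := by
        have e := Dq_unfold (x := 1) (a := s) (c := 1) (by omega) (by omega) (by omega)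
        rwa [show 1 * s - 1 = s - 1 from by omega] at e
      have ecop : Nat.Coprime (s - 1) s := coprime_sub_left 1 s (by omega) (Nat.coprime_one_left s)
      have eW := ih s (by omega) (s - 1) (by omega) (by omega) ecop
      rw [show s - (s - 1) = 1 from by omega] at eW
      rw [eN', Nq_one_left s (by omega), eDq, ← eW,
        W_one_right (s - 1) (by omega), show s - 1 + 1 = s from by omega]
      have hXs : X * (X : Polynomial ℤ) ^ (s - 1) = X ^ s := by
        conv_rhs => rw [show s = (s - 1) + 1 from by omega]
        rw [pow_succ]; ring
      rw [qInt_succ', hXs]; ring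
    · -- 2 ≤ x
      have hx2' : 2 ≤ x := hx2
      have hsx : s ≠ x := by
        intro he
        have hdvd : s ∣ s + x := ⟨2, by omega⟩
        have := hco.eq_one_of_dvd hdvd
        omega
      rcases lt_or_gt_of_ne hsx with hlt | hgt
      · -- s < x
        rw [W_lt' s x hs2' hx2' hlt]
        set r := x % s with hr
        have hr1 : 1 ≤ r := by
          by_contra hcon
          have h0 : x % s = 0 := by omega
          have hd : s ∣ x := Nat.dvd_of_mod_eq_zero h0
          have hdd : s ∣ s + x := Dvd.dvd.add (dvd_refl s) hd
          have := hco.eq_one_of_dvd hdd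
          omega
        have hr2 : r < s := by rw [hr]; exact Nat.mod_lt _ (by omega)
        have hcrs : Nat.Coprime r s := by
          have h : Nat.gcd s x = 1 := hcsx
          rw [Nat.gcd_rec] at h
          exact h
        have hcsr : Nat.Coprime (s - r) s := coprime_sub_left r s (by omega) hcrs
        have eA := ih s (by omega) (s - r) (by omega) (by omega) hcsr
        rw [show s - (s - r) = r from by omega] at eA
        have eB := ih x (by omega) s hs1 hlt hcsx
        obtain ⟨eN, _⟩ := Nq_Dq_add x s hx1 (by omega)
        obtain ⟨q, hq⟩ : ∃ q, x = s * q + r := ⟨x / s, by rw [hr]; exact (Nat.div_add_mod x s).symm⟩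
        have hprod : (q + 1) * s = s * q + s := by ring
        have eDq : Dq x s = Nq s (s - r) := by
          have e := Dq_unfold (x := x) (a := s) (c := q + 1) (by omega) (by omega) (by omega)
          rwa [show (q + 1) * s - x = s - r from by omega] at e
        rw [show s + x = x + s from by omega, eN, eDq, eA, eB]
        ring
      · -- x < s
        rw [W_ge' s x hs2' hx2' hgt]
        set d := s % x with hd
        have hd1 : 1 ≤ d := by
          by_contra hcon
          have h0 : s % x = 0 := by omega
          have hdvd : x ∣ s := Nat.dvd_of_mod_eq_zero h0
          have := (hcsx.symm).eq_one_of_dvd hdvd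
          omega
        have hd2 : d < x := by rw [hd]; exact Nat.mod_lt _ (by omega)
        obtain ⟨q, hq⟩ : ∃ q, s = x * q + d := ⟨s / x, by rw [hd]; exact (Nat.div_add_mod s x).symm⟩
        have hq1 : 1 ≤ q := by
          rcases Nat.eq_zero_or_pos q with rfl | h
          · rw [mul_zero, zero_add] at hq; omega
          · exact h
        have hexp : (s + x - 1) / x = q + 1 := by
          apply Nat.div_eq_of_lt_le
          · have h3 : (q + 1) * x = x * q + x := by ring
            omega
          · have h3 : (q + 1 + 1) * x = x * q + x + x := by ring
            omega
        rw [hexp]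
        have hcx_s : Nat.Coprime (s - x) s := coprime_sub_left x s (by omega) hcsx.symm
        have eC := ih s (by omega) (s - x) (by omega) (by omega) hcx_s
        rw [show s - (s - x) = x from by omega] at eC
        have hcdx : Nat.Coprime d x := by
          have h : Nat.gcd x s = 1 := hcsx.symm
          rw [Nat.gcd_rec] at h
          exact h
        have eD2 := ih x (by omega) d hd1 hd2 hcdx
        obtain ⟨eN, _⟩ := Nq_Dq_add x s hx1 (by omega)
        have e2 := Nq_unfold (x := x) (a := s) (c := 1) (by omega) (by omega) (by omega)
        rw [show 1 * s - x = s - x from by omega, qInt_one, pow_zero] at e2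
        have e3 := Dq_unfold (x := x) (a := s) (c := 1) (by omega) (by omega) (by omega)
        rw [show 1 * s - x = s - x from by omega] at e3
        obtain ⟨eN2, eD2'⟩ := Nq_Dq_add x (s - x) hx1 (by omega)
        rw [show x + (s - x) = s from by omega] at eN2 eD2'
        have e6 : Nq x (s - x) = X ^ (q - 1) * Nq x d := by
          have e := Nq_den_add_mul x d (q - 1) (by omega) (by omega)
          have h3 : (q - 1 + 1) * x = (q - 1) * x + x := by ring
          have h4 : q - 1 + 1 = q := by omega
          rw [h4] at h3
          have h5 : q * x = x * q := by ring
          rwa [show d + (q - 1) * x = s - x from by omega] at e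
        have hpow : (X : Polynomial ℤ) ^ (q + 1) = X ^ (q - 1) * X ^ 2 := by
          rw [show q + 1 = (q - 1) + 2 from by omega, pow_add]
        rw [show s + x = x + s from by omega, eN, e2, e3, eC, eD2, eN2, eD2', e6, hpow]
        ring

/-- For coprime `1 ≤ a ≤ x`: `(a, x)_q = N_q((a+x)/a)`. -/
theorem W_eq_Nq (a x : ℕ) (hco : Nat.Coprime a x) (ha : 1 ≤ a) (hax : a ≤ x) :
    W a x = Nq (a + x) a := by
  have hc : Nat.Coprime a (a + x) := by
    have h : Nat.Coprime a (x + a) := Nat.coprime_add_self_right.mpr hco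
    rwa [show x + a = a + x from by omega] at h
  have h := W_eq_Nq_aux (a + x) a ha (by omega) hc
  rwa [Nat.add_sub_cancel_left] at h
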